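/- In any linear extension L of the standard example S_k, there is at most one index i ∈ {1, …, k} with b_i <_L a_i. -/
import Mathlib


/-- Underlying order of the standard example `S_k`:
`a_i = Sum.inl i` are the minimal elements, `b_j = Sum.inr j` are the maximal
elements, and `a_i < b_j` iff `i ≠ j` (no other strict comparabilities). -/
def stdLE (k : ℕ) : Fin k ⊕ Fin k → Fin k ⊕ Fin k → Prop
  | Sum.inl i, Sum.inl j => i = j
  | Sum.inl i, Sum.inr j => i ≠ j
  | Sum.inr i, Sum.inr j => i = j
  | Sum.inr _, Sum.inl _ => False

/-- In any linear extension `L` of the standard example `S_k`, there is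
at most one index `i` with `b_i <_L a_i`. -/
theorem at_most_one_reversed_pair {k : ℕ} (L : Fin k ⊕ Fin k → Fin k ⊕ Fin k → Prop)
    (hlin : IsLinearOrder (Fin k ⊕ Fin k) L)
    (hext : ∀ x y, stdLE k x y → L x y)
    (i j : Fin k)
    (hi : L (Sum.inr i) (Sum.inl i)) (hj : L (Sum.inr j) (Sum.inl j)) :
    i = j := by
  by_contra hne
  have h1 : L (Sum.inl i) (Sum.inr j) := hext _ _ (by simpa [stdLE] using hne)
  have h2 : L (Sum.inl j) (Sum.inr i) := hext _ _ (by simpa [stdLE] using (Ne.symm hne))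
  have t1 : L (Sum.inr j) (Sum.inl i) :=
    hlin.trans _ _ _ hj (hlin.trans _ _ _ h2 hi)
  exact absurd (hlin.antisymm _ _ h1 t1) (by simp)
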